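/- Let C ⊂ ℝ^n be compact and convex, and let sequences (c_k) in ℝ^n, (r_k) in ℝ, (w_k) in ℝ^n satisfy: ‖c_k‖ → ∞, c_k/‖c_k‖ → p, w_k → w̄ ∈ C, and ‖c_k - x‖ ≤ r_k ≤ ‖c_k - w_k‖ for all x ∈ C and all k. Then ⟨x - w̄, p⟩ ≥ 0 for all x ∈ C. -/

import Mathlib

/-- If `C ⊂ ℝⁿ` is compact convex, `‖c_k‖ → ∞`, `c_k/‖c_k‖ → p`, `w_k → w̄ ∈ C`, and
`‖c_k - x‖ ≤ r_k ≤ ‖c_k - w_k‖` for all `x ∈ C` and all `k`, then `⟨x - w̄, p⟩ ≥ 0`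
for all `x ∈ C`. -/
theorem stmt6 (n : ℕ) (C : Set (EuclideanSpace ℝ (Fin n))) (hC : IsCompact C)
    (hconv : Convex ℝ C)
    (c w : ℕ → EuclideanSpace ℝ (Fin n)) (r : ℕ → ℝ)
    (p wbar : EuclideanSpace ℝ (Fin n))
    (hc : Filter.Tendsto (fun k => ‖c k‖) Filter.atTop Filter.atTop)
    (hp : Filter.Tendsto (fun k => ‖c k‖⁻¹ • c k) Filter.atTop (nhds p))
    (hw : Filter.Tendsto w Filter.atTop (nhds wbar)) (hwbar : wbar ∈ C)
    (h1 : ∀ k, ∀ x ∈ C, ‖c k - x‖ ≤ r k)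
    (h2 : ∀ k, r k ≤ ‖c k - w k‖) :
    ∀ x ∈ C, (0 : ℝ) ≤ inner ℝ (x - wbar) p := by
  intro x hx
  rw [real_inner_comm]
  set f : ℕ → ℝ := fun k =>
    (inner ℝ (‖c k‖⁻¹ • c k) (x - w k) : ℝ) - ‖c k‖⁻¹ * ((‖x‖ ^ 2 - ‖w k‖ ^ 2) / 2) with hf
  have hlim : Filter.Tendsto f Filter.atTop (nhds ((inner ℝ p (x - wbar) : ℝ) - 0)) := by
    apply Filter.Tendsto.sub
    · exact hp.inner (tendsto_const_nhds.sub hw)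
    · have h0 : Filter.Tendsto (fun k => ‖c k‖⁻¹) Filter.atTop (nhds 0) :=
        tendsto_inv_atTop_zero.comp hc
      have h1' : Filter.Tendsto (fun k => (‖x‖ ^ 2 - ‖w k‖ ^ 2) / 2) Filter.atTop
          (nhds ((‖x‖ ^ 2 - ‖wbar‖ ^ 2) / 2)) := by
        apply Filter.Tendsto.div_const
        exact tendsto_const_nhds.sub ((hw.norm).pow 2)
      simpa using h0.mul h1'
  rw [sub_zero] at hlim
  refine ge_of_tendsto hlim ?_
  filter_upwards [hc.eventually_gt_atTop 0] with k hk
  have hle : ‖c k - x‖ ≤ ‖c k - w k‖ := (h1 k x hx).trans (h2 k)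
  have hsq : ‖c k - x‖ * ‖c k - x‖ ≤ ‖c k - w k‖ * ‖c k - w k‖ :=
    mul_self_le_mul_self (norm_nonneg _) hle
  have e1 : ‖c k - x‖ ^ 2 = ‖c k‖ ^ 2 - 2 * inner ℝ (c k) x + ‖x‖ ^ 2 :=
    norm_sub_sq_real (c k) x
  have e2 : ‖c k - w k‖ ^ 2 = ‖c k‖ ^ 2 - 2 * inner ℝ (c k) (w k) + ‖w k‖ ^ 2 :=
    norm_sub_sq_real (c k) (w k)
  have key : (‖x‖ ^ 2 - ‖w k‖ ^ 2) / 2 ≤ (inner ℝ (c k) (x - w k) : ℝ) := by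
    rw [inner_sub_right]
    nlinarith [hsq, e1, e2]
  have hinv : (0 : ℝ) ≤ ‖c k‖⁻¹ := inv_nonneg.mpr (le_of_lt hk)
  have : (inner ℝ (‖c k‖⁻¹ • c k) (x - w k) : ℝ) = ‖c k‖⁻¹ * inner ℝ (c k) (x - w k) :=
    real_inner_smul_left _ _ _
  simp only [hf, this]
  have := mul_le_mul_of_nonneg_left key hinv
  linarith
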